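/- arXiv:1804.11278 — 2 statements merged into one kernel-verified Lean document; each statement's English description precedes it below -/
import Mathlib

section
/- Suppose (f*, f_0*) is the optimal solution of the joint I-AMoD problem with KKT multipliers λ_C (customer conservation), λ_R (vehicle conservation), μ_cR ≥ 0 (road capacity), μ_cP ≥ 0 (subway capacity). If the subway fare on arc (i,j) ∈ A_P is set to p_P(i,j) = V_{D,P}·d_{ij} + μ_cP(i,j), the road toll to τ_R(i,j) = μ_cR(i,j), the per-road-arc customer price to p_R(i,j) = V_{D,R}·d_{ij} + V_E·e_{R,ij} + τ_R(i,j), and origin/destination charges to p_O(i) = −λ_R(i), p_D(i) = λ_R(i), then for each commodity m the flow f_m* satisfies the KKT stationarity conditions of the individual customer's routing problem with dual variable λ_C. -/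
/-- Suppose the optimal customer flows `f*` of the joint I-AMoD
problem satisfy the joint KKT stationarity conditions on road arcs `A_R`,
subway arcs `A_P` and walking arcs `A_W`, with multipliers `λ_C` (customer
conservation), `λ_R` (vehicle conservation), `μ_cR ≥ 0` (road capacity) and
`μ_cP ≥ 0` (subway capacity).  If prices are set as
`p_P(i,j) = V_DP·d_ij + μ_cP(i,j)`, `τ_R(i,j) = μ_cR(i,j)`,
`p_R(i,j) = V_DR·d_ij + V_E·e_R(i,j) + τ_R(i,j)`, `p_O(i) = −λ_R(i)`,
`p_D(i) = λ_R(i)`, then for each commodity `m` the flow `f_m*` satisfies the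
KKT stationarity conditions of the individual customer's routing problem with
dual variable `λ_C`. -/
theorem customer_KKT_from_joint_KKT
    {V M : Type*} (AR AP AW : Finset (V × V))
    (VT VDR VE VDP VQ : ℝ)
    (t d eR : V × V → ℝ) (lamC lamR : V → ℝ) (μcR μcP : V × V → ℝ)
    (hμcR : ∀ e, 0 ≤ μcR e) (hμcP : ∀ e, 0 ≤ μcP e)
    (f : M → V × V → ℝ)
    -- joint stationarity on road arcs
    (hroad : ∀ m : M, ∀ i j : V, (i, j) ∈ AR →
      (VT * t (i, j) + VDR * d (i, j) + VE * eR (i, j))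
        + lamC j - lamC i + lamR j - lamR i + μcR (i, j)
        + 2 * VQ * f m (i, j) = 0)
    -- joint stationarity on subway arcs
    (hsub : ∀ m : M, ∀ i j : V, (i, j) ∈ AP →
      (VT * t (i, j) + VDP * d (i, j)) + lamC j - lamC i + μcP (i, j)
        + 2 * VQ * f m (i, j) = 0)
    -- joint stationarity on walking arcs
    (hwalk : ∀ m : M, ∀ i j : V, (i, j) ∈ AW →
      VT * t (i, j) + lamC j - lamC i + 2 * VQ * f m (i, j) = 0)
    -- prices
    (pP τR pR : V × V → ℝ) (pO pD : V → ℝ)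
    (hpP : ∀ e, pP e = VDP * d e + μcP e)
    (hτR : ∀ e, τR e = μcR e)
    (hpR : ∀ e, pR e = VDR * d e + VE * eR e + τR e)
    (hpO : ∀ i, pO i = - lamR i)
    (hpD : ∀ i, pD i = lamR i) :
    -- customer stationarity with dual variable λ_C
    (∀ m : M, ∀ i j : V, (i, j) ∈ AR →
      VT * t (i, j) + pO i - pO j + pR (i, j)
        + lamC j - lamC i + 2 * VQ * f m (i, j) = 0)
    ∧ (∀ m : M, ∀ i j : V, (i, j) ∈ AP →
      VT * t (i, j) + pP (i, j) + lamC j - lamC i + 2 * VQ * f m (i, j) = 0)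
    ∧ (∀ m : M, ∀ i j : V, (i, j) ∈ AW →
      VT * t (i, j) + lamC j - lamC i + 2 * VQ * f m (i, j) = 0) := by
  refine ⟨fun m i j h => ?_, fun m i j h => ?_, fun m i j h => ?_⟩
  · have := hroad m i j h
    rw [hpO, hpO, hpR, hτR]; linarith
  · have := hsub m i j h
    rw [hpP]; linarith
  · exact hwalk m i j h
end

section
/- Under the tolling scheme τ_R(i,j) = μ_cR(i,j), the optimal rebalancing flow f_0* of the joint I-AMoD problem satisfies the KKT stationarity conditions of the selfish AMoD operator's rebalancing problem with dual variable λ̃_R = λ_R; hence f_0* is the operator's unique optimal response. -/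
open Finset

lemma fiber_fst {VR : Type*} [Fintype VR] [DecidableEq VR]
    (AR : Finset (VR × VR)) (h : VR × VR → ℝ) (v : VR) :
    ∑ e ∈ AR.filter (fun e => e.1 = v), h e
      = ∑ k ∈ univ.filter (fun k => (v, k) ∈ AR), h (v, k) := by
  apply Finset.sum_nbij' (fun e => e.2) (fun k => (v, k)) <;>
    simp +contextual [Prod.ext_iff, eq_comm]

lemma fiber_snd {VR : Type*} [Fintype VR] [DecidableEq VR]
    (AR : Finset (VR × VR)) (h : VR × VR → ℝ) (v : VR) :
    ∑ e ∈ AR.filter (fun e => e.2 = v), h e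
      = ∑ i ∈ univ.filter (fun i => (i, v) ∈ AR), h (i, v) := by
  apply Finset.sum_nbij' (fun e => e.1) (fun i => (i, v)) <;>
    simp +contextual [Prod.ext_iff, eq_comm]

lemma lin_term_zero {VR : Type*} [Fintype VR] [DecidableEq VR]
    (AR : Finset (VR × VR)) (lam : VR → ℝ) (h : VR × VR → ℝ)
    (hc : ∀ j : VR, ∑ i ∈ univ.filter (fun i => (i, j) ∈ AR), h (i, j)
        = ∑ k ∈ univ.filter (fun k => (j, k) ∈ AR), h (j, k)) :
    ∑ e ∈ AR, (lam e.1 - lam e.2) * h e = 0 := by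
  have h1 : ∑ e ∈ AR, lam e.1 * h e
      = ∑ v : VR, lam v * ∑ k ∈ univ.filter (fun k => (v, k) ∈ AR), h (v, k) := by
    rw [← Finset.sum_fiberwise_of_maps_to (g := fun e => e.1)
      (fun x _ => mem_univ _) (fun e => lam e.1 * h e)]
    refine Finset.sum_congr rfl fun v _ => ?_
    have : ∑ e ∈ AR.filter (fun e => e.1 = v), lam e.1 * h e
        = lam v * ∑ e ∈ AR.filter (fun e => e.1 = v), h e := by
      rw [Finset.mul_sum]
      exact Finset.sum_congr rfl fun e he => by
        simp only [mem_filter] at he; rw [he.2]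
    rw [this, fiber_fst]
  have h2 : ∑ e ∈ AR, lam e.2 * h e
      = ∑ v : VR, lam v * ∑ i ∈ univ.filter (fun i => (i, v) ∈ AR), h (i, v) := by
    rw [← Finset.sum_fiberwise_of_maps_to (g := fun e => e.2)
      (fun x _ => mem_univ _) (fun e => lam e.2 * h e)]
    refine Finset.sum_congr rfl fun v _ => ?_
    have : ∑ e ∈ AR.filter (fun e => e.2 = v), lam e.2 * h e
        = lam v * ∑ e ∈ AR.filter (fun e => e.2 = v), h e := by
      rw [Finset.mul_sum]
      exact Finset.sum_congr rfl fun e he => by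
        simp only [mem_filter] at he; rw [he.2]
    rw [this, fiber_snd]
  have : ∑ e ∈ AR, (lam e.1 - lam e.2) * h e
      = ∑ e ∈ AR, lam e.1 * h e - ∑ e ∈ AR, lam e.2 * h e := by
    rw [← Finset.sum_sub_distrib]; exact Finset.sum_congr rfl fun e _ => by ring
  rw [this, h1, h2, ← Finset.sum_sub_distrib]
  refine Finset.sum_eq_zero fun v _ => ?_
  rw [hc v]; ring

/-- Under the tolling scheme `τ_R = μ_cR`, the optimal rebalancing
flow `f₀*` of the joint I-AMoD problem (which satisfies the joint stationarity
condition `(V_DR·d + V_E·e_R) + λ_R(j) − λ_R(i) + μ_cR(i,j) + 2V_Q·f₀*(i,j) = 0`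
on every road arc) satisfies the KKT stationarity conditions of the selfish
AMoD operator's rebalancing problem with dual variable `λ̃_R = λ_R`; hence
`f₀*` is the operator's unique optimal response: it strictly beats every other
rebalancing flow satisfying vehicle conservation with the given customer
flows. -/
theorem operator_KKT_from_joint_KKT
    {VR M : Type*} [Fintype VR] [Fintype M] [DecidableEq VR]
    (AR : Finset (VR × VR))
    (VDR VE VQ : ℝ) (hVQ : 0 < VQ)
    (d eR : VR × VR → ℝ) (lamR : VR → ℝ) (μcR τR : VR × VR → ℝ)
    (hτR : ∀ e, τR e = μcR e)
    (f : M → VR × VR → ℝ) (f₀ : VR × VR → ℝ)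
    -- joint KKT stationarity on the rebalancing variables
    (hstat : ∀ i j : VR, (i, j) ∈ AR →
      (VDR * d (i, j) + VE * eR (i, j)) + lamR j - lamR i + μcR (i, j)
        + 2 * VQ * f₀ (i, j) = 0)
    -- vehicle conservation (the operator's feasible set), satisfied by f₀
    (Cons : (VR × VR → ℝ) → Prop)
    (hCons : Cons = fun g => ∀ j : VR,
      (∑ i ∈ Finset.univ.filter (fun i => (i, j) ∈ AR),
          (g (i, j) + ∑ m : M, f m (i, j)))
        = ∑ k ∈ Finset.univ.filter (fun k => (j, k) ∈ AR),
            (g (j, k) + ∑ m : M, f m (j, k)))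
    (hfeas : Cons f₀)
    -- the operator's cost
    (C : (VR × VR → ℝ) → ℝ)
    (hC : C = fun g => ∑ e ∈ AR,
      ((VDR * d e + VE * eR e + τR e) * g e + VQ * (g e) ^ 2)) :
    -- operator stationarity with dual variable λ̃_R = λ_R …
    (∀ i j : VR, (i, j) ∈ AR →
      VDR * d (i, j) + VE * eR (i, j) + τR (i, j) + lamR j - lamR i
        + 2 * VQ * f₀ (i, j) = 0)
    -- … hence f₀ is the operator's unique optimal response
    ∧ (∀ g, Cons g → (∃ e ∈ AR, g e ≠ f₀ e) → C f₀ < C g)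
    ∧ (∀ g, Cons g → C f₀ ≤ C g) := by
  subst hCons hC
  have stat : ∀ i j : VR, (i, j) ∈ AR →
      VDR * d (i, j) + VE * eR (i, j) + τR (i, j) + lamR j - lamR i
        + 2 * VQ * f₀ (i, j) = 0 := by
    intro i j hij
    have := hstat i j hij
    rw [hτR]
    linarith
  -- key identity: for feasible g, C g = C f₀ + VQ * ∑ (g e - f₀ e)^2
  have key : ∀ g : VR × VR → ℝ,
      (∀ j : VR,
        (∑ i ∈ Finset.univ.filter (fun i => (i, j) ∈ AR),
            (g (i, j) + ∑ m : M, f m (i, j)))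
          = ∑ k ∈ Finset.univ.filter (fun k => (j, k) ∈ AR),
              (g (j, k) + ∑ m : M, f m (j, k))) →
      (∑ e ∈ AR, ((VDR * d e + VE * eR e + τR e) * g e + VQ * (g e) ^ 2))
        = (∑ e ∈ AR, ((VDR * d e + VE * eR e + τR e) * f₀ e + VQ * (f₀ e) ^ 2))
          + VQ * ∑ e ∈ AR, (g e - f₀ e) ^ 2 := by
    intro g hg
    have hcons : ∀ j : VR,
        ∑ i ∈ Finset.univ.filter (fun i => (i, j) ∈ AR), (g (i, j) - f₀ (i, j))
          = ∑ k ∈ Finset.univ.filter (fun k => (j, k) ∈ AR), (g (j, k) - f₀ (j, k)) := by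
      intro j
      have h1 := hg j
      have h2 := hfeas j
      simp only [Finset.sum_add_distrib] at h1 h2
      rw [Finset.sum_sub_distrib, Finset.sum_sub_distrib]
      linarith
    have hz : ∑ e ∈ AR, (lamR e.1 - lamR e.2) * (g e - f₀ e) = 0 :=
      lin_term_zero AR lamR (fun e => g e - f₀ e) hcons
    have hsplit : ∀ e ∈ AR,
        (VDR * d e + VE * eR e + τR e) * g e + VQ * (g e) ^ 2
          = ((VDR * d e + VE * eR e + τR e) * f₀ e + VQ * (f₀ e) ^ 2)
            + ((lamR e.1 - lamR e.2) * (g e - f₀ e) + VQ * (g e - f₀ e) ^ 2) := by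
      intro e he
      have hs := stat e.1 e.2 he
      simp only [Prod.mk.eta] at hs
      have hL : VDR * d e + VE * eR e + τR e
          = lamR e.1 - lamR e.2 - 2 * VQ * f₀ e := by linarith
      rw [hL]; ring
    calc (∑ e ∈ AR, ((VDR * d e + VE * eR e + τR e) * g e + VQ * (g e) ^ 2))
        = ∑ e ∈ AR, (((VDR * d e + VE * eR e + τR e) * f₀ e + VQ * (f₀ e) ^ 2)
            + ((lamR e.1 - lamR e.2) * (g e - f₀ e) + VQ * (g e - f₀ e) ^ 2)) :=
          Finset.sum_congr rfl hsplit
      _ = (∑ e ∈ AR, ((VDR * d e + VE * eR e + τR e) * f₀ e + VQ * (f₀ e) ^ 2))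
            + ((∑ e ∈ AR, (lamR e.1 - lamR e.2) * (g e - f₀ e))
              + VQ * ∑ e ∈ AR, (g e - f₀ e) ^ 2) := by
          simp only [Finset.sum_add_distrib, Finset.mul_sum]
      _ = _ := by rw [hz]; ring
  refine ⟨stat, ?_, ?_⟩
  · intro g hg ⟨e, he, hne⟩
    have hk := key g hg
    have hpos : 0 < ∑ e ∈ AR, (g e - f₀ e) ^ 2 :=
      Finset.sum_pos' (fun a _ => sq_nonneg _)
        ⟨e, he, by
          have hne' : g e - f₀ e ≠ 0 := sub_ne_zero.mpr hne
          positivity⟩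
    nlinarith
  · intro g hg
    have hk := key g hg
    have hpos : 0 ≤ ∑ e ∈ AR, (g e - f₀ e) ^ 2 :=
      Finset.sum_nonneg fun a _ => sq_nonneg _
    nlinarith
end
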